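/- Let K be a field of characteristic zero and let L be the free nilpotent Lie algebra of rank 2 and step 3 over K (the Cartan algebra), with generators x_1, x_2, and set x_{12} = ⁅x_1, x_2⁆, x_{112} = ⁅x_1, x_{12}⁆, x_{212} = ⁅x_2, x_{12}⁆. Then the quadratic function p ↦ ½ p(x_{12})² + p(x_1)p(x_{212}) − p(x_2)p(x_{112}) on L* is infinitesimally invariant under the coadjoint representation: for every p ∈ L* and every v ∈ L, p(⁅v, x_{12}⁆)·p(x_{12}) + p(⁅v, x_1⁆)·p(x_{212}) + p(x_1)·p(⁅v, x_{212}⁆) − p(⁅v, x_2⁆)·p(x_{112}) − p(x_2)·p(⁅v, x_{112}⁆) = 0. (Hence ½ξ_{12}² + ξ_1ξ_{212} − ξ_2ξ_{112} is a Casimir function of the Cartan group.) -/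

import Mathlib

/-- The free nilpotent Lie algebra of rank `r` and step `s` over `K`: the quotient of the
free Lie algebra `F` on `r` generators by the `s`-th term `C_s(F)` of its lower central
series (`C_0 = F`, `C_{k+1} = ⁅F, C_k⁆`). -/
abbrev FreeNilpotentLie (K : Type*) [Field K] (r s : ℕ) :=
  FreeLieAlgebra K (Fin r) ⧸
    LieModule.lowerCentralSeries K (FreeLieAlgebra K (Fin r)) (FreeLieAlgebra K (Fin r)) s

/-- The canonical generators `X_1, …, X_r` of the free nilpotent Lie algebra, i.e. the images
of the free generators. -/
noncomputable def FreeNilpotentLie.gen (K : Type*) [Field K] (r s : ℕ) (i : Fin r) :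
    FreeNilpotentLie K r s :=
  LieSubmodule.Quotient.mk' _ (FreeLieAlgebra.of K i)

/-- `G₁`: the `K`-span of the generators. -/
noncomputable def FreeNilpotentLie.G1 (K : Type*) [Field K] (r s : ℕ) :
    Submodule K (FreeNilpotentLie K r s) :=
  Submodule.span K (Set.range (FreeNilpotentLie.gen K r s))

section Aux
variable (K : Type*) [Field K] (r s : ℕ)

/-- The quotient map as a Lie algebra morphism. -/
noncomputable def FreeNilpotentLie.mkHom :
    FreeLieAlgebra K (Fin r) →ₗ⁅K⁆ FreeNilpotentLie K r s :=
  { (LieSubmodule.Quotient.mk'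
      (LieModule.lowerCentralSeries K (FreeLieAlgebra K (Fin r))
        (FreeLieAlgebra K (Fin r)) s) : _ →ₗ[K] _) with
    map_lie' := by intro x y; rfl }

theorem FreeNilpotentLie.lcs_self_eq_bot :
    LieModule.lowerCentralSeries K (FreeNilpotentLie K r s) (FreeNilpotentLie K r s) s = ⊥ := by
  set F := FreeLieAlgebra K (Fin r)
  set I := LieModule.lowerCentralSeries K F F s with hI
  have h1 : LieModule.lowerCentralSeries K F (F ⧸ I) s = ⊥ := by
    rw [← LieModule.map_lowerCentralSeries_eq s (LieSubmodule.Quotient.surjective_mk' I)]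
    rw [LieSubmodule.Quotient.map_mk'_eq_bot_le]
  rw [← LieSubmodule.toSubmodule_inj, ← coe_lowerCentralSeries_ideal_quot_eq, h1]
  rfl

end Aux

namespace CartanAlg

variable (K : Type*) [Field K]

noncomputable def x1 : FreeNilpotentLie K 2 3 := FreeNilpotentLie.gen K 2 3 0
noncomputable def x2 : FreeNilpotentLie K 2 3 := FreeNilpotentLie.gen K 2 3 1
noncomputable def x12 : FreeNilpotentLie K 2 3 := ⁅x1 K, x2 K⁆
noncomputable def x112 : FreeNilpotentLie K 2 3 := ⁅x1 K, x12 K⁆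
noncomputable def x212 : FreeNilpotentLie K 2 3 := ⁅x2 K, x12 K⁆

local notation "L" => FreeNilpotentLie K 2 3

theorem lie_eq_zero_of_mem_lcs2 {x : L} 
    (hx : x ∈ LieModule.lowerCentralSeries K L L 2) (v : L) : ⁅v, x⁆ = 0 := by
  have h : ⁅v, x⁆ ∈ LieModule.lowerCentralSeries K L L (2 + 1) :=
    (LieModule.lowerCentralSeries_succ K L L 2).ge
      (LieSubmodule.lie_mem_lie (LieSubmodule.mem_top v) hx)
  rw [FreeNilpotentLie.lcs_self_eq_bot] at h
  simpa using h

theorem x12_mem_lcs1 : x12 K ∈ LieModule.lowerCentralSeries K L L 1 := by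
  show ⁅x1 K, x2 K⁆ ∈ _
  exact (LieModule.lowerCentralSeries_succ K L L 0).ge
    (LieSubmodule.lie_mem_lie (LieSubmodule.mem_top _) (LieSubmodule.mem_top _))

theorem x112_mem_lcs2 : x112 K ∈ LieModule.lowerCentralSeries K L L 2 := by
  show ⁅x1 K, x12 K⁆ ∈ _
  exact (LieModule.lowerCentralSeries_succ K L L 1).ge
    (LieSubmodule.lie_mem_lie (LieSubmodule.mem_top _) (x12_mem_lcs1 K))

theorem x212_mem_lcs2 : x212 K ∈ LieModule.lowerCentralSeries K L L 2 := by
  show ⁅x2 K, x12 K⁆ ∈ _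
  exact (LieModule.lowerCentralSeries_succ K L L 1).ge
    (LieSubmodule.lie_mem_lie (LieSubmodule.mem_top _) (x12_mem_lcs1 K))

end CartanAlg

namespace CartanAlg

variable (K : Type*) [Field K]

local notation "L" => FreeNilpotentLie K 2 3

noncomputable def Tsub : Submodule K L :=
  (Submodule.span K {x1 K, x2 K, x12 K}) ⊔ (LieModule.lowerCentralSeries K L L 2).toSubmodule

theorem mem_T_iff (v : L) : v ∈ Tsub K ↔ ∃ a b e : K,
    ∃ d ∈ LieModule.lowerCentralSeries K L L 2,
    v = a • x1 K + b • x2 K + e • x12 K + d := by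
  constructor
  · intro hv
    obtain ⟨s, hs, d, hd, rfl⟩ := Submodule.mem_sup.mp hv
    rw [Submodule.mem_span_insert] at hs
    obtain ⟨a, z, hz, rfl⟩ := hs
    rw [Submodule.mem_span_insert] at hz
    obtain ⟨b, z2, hz2, rfl⟩ := hz
    rw [Submodule.mem_span_singleton] at hz2
    obtain ⟨e, rfl⟩ := hz2
    exact ⟨a, b, e, d, hd, by abel⟩
  · rintro ⟨a, b, e, d, hd, rfl⟩
    have h1 : x1 K ∈ Submodule.span K {x1 K, x2 K, x12 K} := Submodule.subset_span (by simp)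
    have h2 : x2 K ∈ Submodule.span K {x1 K, x2 K, x12 K} := Submodule.subset_span (by simp)
    have h3 : x12 K ∈ Submodule.span K {x1 K, x2 K, x12 K} := Submodule.subset_span (by simp)
    exact add_mem (add_mem (add_mem
      (Submodule.mem_sup_left (Submodule.smul_mem _ a h1))
      (Submodule.mem_sup_left (Submodule.smul_mem _ b h2)))
      (Submodule.mem_sup_left (Submodule.smul_mem _ e h3)))
      (Submodule.mem_sup_right hd)

theorem lie_mem_T (u w : L) (hu : u ∈ Tsub K) (hw : w ∈ Tsub K) : ⁅u, w⁆ ∈ Tsub K := by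
  obtain ⟨a, b, e, d, hd, rfl⟩ := (mem_T_iff K u).mp hu
  obtain ⟨a', b', e', d', hd', rfl⟩ := (mem_T_iff K w).mp hw
  have hdz : ∀ v : L, ⁅v, d'⁆ = 0 := lie_eq_zero_of_mem_lcs2 K hd'
  have hdz' : ∀ v : L, ⁅d, v⁆ = 0 := fun v => by
    rw [← lie_skew, lie_eq_zero_of_mem_lcs2 K hd, neg_zero]
  have b21 : ⁅x2 K, x1 K⁆ = -x12 K := by rw [← lie_skew]; rfl
  have b121 : ⁅x12 K, x1 K⁆ = -x112 K := by rw [← lie_skew]; rfl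
  have b122 : ⁅x12 K, x2 K⁆ = -x212 K := by rw [← lie_skew]; rfl
  have b12 : ⁅x1 K, x2 K⁆ = x12 K := rfl
  have b112 : ⁅x1 K, x12 K⁆ = x112 K := rfl
  have b212 : ⁅x2 K, x12 K⁆ = x212 K := rfl
  have m12 : x12 K ∈ Tsub K := Submodule.mem_sup_left (Submodule.subset_span (by simp))
  have m112 : x112 K ∈ Tsub K := Submodule.mem_sup_right (x112_mem_lcs2 K)
  have m212 : x212 K ∈ Tsub K := Submodule.mem_sup_right (x212_mem_lcs2 K)
  simp only [add_lie, lie_add, smul_lie, lie_smul, hdz, hdz', lie_self, smul_zero, zero_add,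
    add_zero, b21, b121, b122, b12, b112, b212, smul_neg]
  refine add_mem (add_mem (Submodule.smul_mem _ _ ?_) (Submodule.smul_mem _ _ ?_))
    (Submodule.smul_mem _ _ ?_)
  · exact add_mem (neg_mem (Submodule.smul_mem _ _ m12)) (neg_mem (Submodule.smul_mem _ _ m112))
  · exact add_mem (Submodule.smul_mem _ _ m12) (neg_mem (Submodule.smul_mem _ _ m212))
  · exact add_mem (Submodule.smul_mem _ _ m112) (Submodule.smul_mem _ _ m212)

theorem mem_T (v : L) : v ∈ Tsub K := by
  let S : LieSubalgebra K L :=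
    { Tsub K with lie_mem' := fun {x y} hx hy => lie_mem_T K x y hx hy }
  have hgen : ∀ i : Fin 2, FreeNilpotentLie.gen K 2 3 i ∈ S := by
    intro i
    fin_cases i
    · exact Submodule.mem_sup_left (Submodule.subset_span (by simp [x1]))
    · exact Submodule.mem_sup_left (Submodule.subset_span (by simp [x2]))
  let f : FreeLieAlgebra K (Fin 2) →ₗ⁅K⁆ S :=
    FreeLieAlgebra.lift K (fun i => ⟨FreeNilpotentLie.gen K 2 3 i, hgen i⟩)
  have key : S.incl.comp f = FreeNilpotentLie.mkHom K 2 3 := by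
    apply FreeLieAlgebra.hom_ext
    intro i
    show ((f (FreeLieAlgebra.of K i) : S) : L) = _
    rw [FreeLieAlgebra.lift_of_apply]
    rfl
  obtain ⟨w, rfl⟩ := LieSubmodule.Quotient.surjective_mk' _ v
  have h2 := LieHom.congr_fun key w
  exact h2 ▸ (f w).2

end CartanAlg


open CartanAlg in
/-- On the Cartan algebra (free nilpotent, rank 2, step 3) the quadratic
function `p ↦ ½ p(x₁₂)² + p(x₁) p(x₂₁₂) − p(x₂) p(x₁₁₂)` is infinitesimally invariant under
the coadjoint representation. -/
theorem cartan_quadratic_casimir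
    (K : Type*) [Field K] [CharZero K]
    (p : Module.Dual K (FreeNilpotentLie K 2 3)) (v : FreeNilpotentLie K 2 3) :
    p ⁅v, x12 K⁆ * p (x12 K) +
      p ⁅v, x1 K⁆ * p (x212 K) + p (x1 K) * p ⁅v, x212 K⁆ -
      p ⁅v, x2 K⁆ * p (x112 K) - p (x2 K) * p ⁅v, x112 K⁆ = 0 := by
  obtain ⟨a, b, e, d, hd, rfl⟩ := (mem_T_iff K v).mp (mem_T K v)
  have z112 : ∀ u : FreeNilpotentLie K 2 3, ⁅u, x112 K⁆ = 0 :=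
    lie_eq_zero_of_mem_lcs2 K (x112_mem_lcs2 K)
  have z212 : ∀ u : FreeNilpotentLie K 2 3, ⁅u, x212 K⁆ = 0 :=
    lie_eq_zero_of_mem_lcs2 K (x212_mem_lcs2 K)
  have zd : ∀ u : FreeNilpotentLie K 2 3, ⁅d, u⁆ = 0 := fun u => by
    rw [← lie_skew, lie_eq_zero_of_mem_lcs2 K hd, neg_zero]
  have b21 : ⁅x2 K, x1 K⁆ = -x12 K := by rw [← lie_skew]; rfl
  have b121 : ⁅x12 K, x1 K⁆ = -x112 K := by rw [← lie_skew]; rfl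
  have b122 : ⁅x12 K, x2 K⁆ = -x212 K := by rw [← lie_skew]; rfl
  have b12 : ⁅x1 K, x2 K⁆ = x12 K := rfl
  have b112 : ⁅x1 K, x12 K⁆ = x112 K := rfl
  have b212 : ⁅x2 K, x12 K⁆ = x212 K := rfl
  simp only [add_lie, smul_lie, zd, z112, z212, lie_self, b21, b121, b122, b12, b112, b212,
    smul_zero, smul_neg, zero_add, add_zero, map_add, map_smul, map_neg, map_zero, neg_zero,
    smul_eq_mul]
  ring
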